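/- For every integer N ≥ 1 and every index i with 0 ≤ i < 4^N−1, the nodes h_N(i) and h_N(i+1) are edge connected, i.e., their Euclidean distance equals 1. -/

import Mathlib

/-- The `N`-th order approximated Hilbert curve, mapping indices `{0,...,4^N-1}`
to nodes of the grid `{0,...,2^N-1} × {0,...,2^N-1} ⊆ ℤ × ℤ`. -/
def hilbert : ℕ → ℕ → ℤ × ℤ
  | 0, _ => (0, 0)
  | 1, i =>
    if i = 0 then (0, 0)
    else if i = 1 then (0, 1)
    else if i = 2 then (1, 1)
    else (1, 0)
  | N + 2, i =>
    let q := i / 4 ^ (N + 1)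
    let s : ℤ := 2 ^ (N + 1)
    let p := hilbert (N + 1) (i % 4 ^ (N + 1))
    if q = 0 then (p.2, p.1)
    else if q = 1 then (p.1, p.2 + s)
    else if q = 2 then (p.1 + s, p.2 + s)
    else (2 * s - 1 - p.2, s - 1 - p.1)

/-- Euclidean distance between two points of `ℤ × ℤ`. -/
noncomputable def euclDist (a b : ℤ × ℤ) : ℝ :=
  Real.sqrt (((a.1 - b.1 : ℤ) : ℝ) ^ 2 + ((a.2 - b.2 : ℤ) : ℝ) ^ 2)

/-- Two points of `ℤ × ℤ` are edge connected if their Euclidean distance equals 1. -/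
def EdgeConnected (a b : ℤ × ℤ) : Prop := euclDist a b = 1

/-- Two points of `ℤ × ℤ` are vertex connected if both coordinates differ by exactly 1. -/
def VertexConnected (a b : ℤ × ℤ) : Prop := |a.1 - b.1| = 1 ∧ |a.2 - b.2| = 1

/-- Membership in the grid `{0,...,2^N-1} × {0,...,2^N-1}`. -/
def InGrid (N : ℕ) (p : ℤ × ℤ) : Prop :=
  0 ≤ p.1 ∧ p.1 ≤ 2 ^ N - 1 ∧ 0 ≤ p.2 ∧ p.2 ≤ 2 ^ N - 1

/-- The closed segment from `u` to `v` (centres of cells, viewed in `ℝ²`) is disjoint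
from the open unit cell centred at `c`. -/
def SegAvoidsCell (u v c : ℤ × ℤ) : Prop :=
  ∀ t : ℝ, t ∈ Set.Icc (0 : ℝ) 1 →
    ¬ (|(1 - t) * (u.1 : ℝ) + t * (v.1 : ℝ) - (c.1 : ℝ)| < 1 / 2 ∧
       |(1 - t) * (u.2 : ℝ) + t * (v.2 : ℝ) - (c.2 : ℝ)| < 1 / 2)

/-- An evasion tour for the blocked index set `B` on the `N`-th order Hilbert grid:
a sequence of waypoints `w 0, ..., w m` in the grid, starting at the entry node,
ending at the exit node, avoiding all blocked nodes, covering every unblocked grid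
point, and whose straight-line segments avoid the interiors of all blocked cells. -/
def IsEvasionTour (N : ℕ) (B : Finset ℕ) (m : ℕ) (w : ℕ → ℤ × ℤ) : Prop :=
  w 0 = hilbert N 0 ∧
  w m = hilbert N (4 ^ N - 1) ∧
  (∀ j ≤ m, InGrid N (w j)) ∧
  (∀ j ≤ m, ∀ b ∈ B, w j ≠ hilbert N b) ∧
  (∀ p : ℤ × ℤ, InGrid N p → (∀ b ∈ B, p ≠ hilbert N b) → ∃ j ≤ m, w j = p) ∧
  (∀ j < m, ∀ b ∈ B, SegAvoidsCell (w j) (w (j + 1)) (hilbert N b))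

def Adj (a b : ℤ × ℤ) : Prop :=
  (a.1 = b.1 ∧ (a.2 - b.2 = 1 ∨ a.2 - b.2 = -1)) ∨
  (a.2 = b.2 ∧ (a.1 - b.1 = 1 ∨ a.1 - b.1 = -1))

lemma adj_edgeConnected {a b : ℤ × ℤ} (h : Adj a b) : EdgeConnected a b := by
  have key : (a.1 - b.1) ^ 2 + (a.2 - b.2) ^ 2 = 1 := by
    rcases h with ⟨h1, h2 | h2⟩ | ⟨h1, h2 | h2⟩ <;> rw [h2] <;> nlinarith [sq_nonneg (a.1 - b.1), sq_nonneg (a.2 - b.2)]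
  unfold EdgeConnected euclDist
  have : ((a.1 - b.1 : ℤ) : ℝ) ^ 2 + ((a.2 - b.2 : ℤ) : ℝ) ^ 2 = 1 := by
    exact_mod_cast congrArg (fun z : ℤ => (z : ℝ)) key
  rw [this, Real.sqrt_one]

lemma dm (k q a : ℕ) (hk : 0 < k) (ha : a < k) :
    (q * k + a) / k = q ∧ (q * k + a) % k = a := by
  constructor
  · rw [Nat.add_comm, Nat.add_mul_div_right _ _ hk, Nat.div_eq_of_lt ha, Nat.zero_add]
  · rw [Nat.add_comm, Nat.add_mul_mod_self_right, Nat.mod_eq_of_lt ha]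

lemma hilbert_zero : ∀ N, hilbert N 0 = (0, 0)
  | 0 => rfl
  | 1 => rfl
  | (N+2) => by
    simp only [hilbert, Nat.zero_div, Nat.zero_mod, hilbert_zero (N+1)]
    simp

lemma hilbert_last : ∀ N, 1 ≤ N → hilbert N (4 ^ N - 1) = (2 ^ N - 1, 0)
  | 1, _ => by norm_num [hilbert]
  | (N+2), _ => by
    have hk : 0 < 4 ^ (N+1) := Nat.pow_pos (by norm_num)
    have h4 : (4:ℕ) ^ (N+2) = 4 * 4 ^ (N+1) := by ring
    have he : 4 ^ (N+2) - 1 = 3 * 4 ^ (N+1) + (4 ^ (N+1) - 1) := by omega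
    obtain ⟨hd, hm⟩ := dm (4 ^ (N+1)) 3 (4 ^ (N+1) - 1) hk (by omega)
    have hIH := hilbert_last (N+1) (by omega)
    simp only [hilbert, he, hd, hm, hIH]
    norm_num [Prod.ext_iff]
    push_cast
    ring

lemma hilbert_adj : ∀ N, 1 ≤ N → ∀ i, i < 4 ^ N - 1 → Adj (hilbert N i) (hilbert N (i+1))
  | 0, h, _, _ => absurd h (by omega)
  | 1, _, i, hi => by
    interval_cases i <;> simp [hilbert, Adj]
  | (N+2), _, i, hi => by
    have hk : 0 < 4 ^ (N+1) := Nat.pow_pos (by norm_num)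
    have h4 : (4:ℕ) ^ (N+2) = 4 * 4 ^ (N+1) := by ring
    obtain ⟨q, r, hrk, rfl⟩ : ∃ q r, r < 4 ^ (N+1) ∧ i = q * 4 ^ (N+1) + r :=
      ⟨i / 4 ^ (N+1), i % 4 ^ (N+1), Nat.mod_lt _ hk, (Nat.div_add_mod' i _).symm⟩
    have hq3 : q < 4 := by
      by_contra h
      push_neg at h
      have : 4 * 4 ^ (N+1) ≤ q * 4 ^ (N+1) := Nat.mul_le_mul_right _ h
      omega
    obtain ⟨hd0, hm0⟩ := dm (4 ^ (N+1)) q r hk hrk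
    by_cases hb : r + 1 < 4 ^ (N+1)
    · -- same quadrant
      obtain ⟨hd, hm⟩ := dm (4 ^ (N+1)) q (r+1) hk hb
      have hi1 : q * 4 ^ (N+1) + r + 1 = q * 4 ^ (N+1) + (r+1) := by omega
      have hIH : Adj (hilbert (N+1) r) (hilbert (N+1) (r+1)) :=
        hilbert_adj (N+1) (by omega) r (by omega)
      simp only [hilbert, hi1, hd, hm, hd0, hm0]
      unfold Adj at hIH ⊢
      split_ifs <;> simp only [Prod.fst, Prod.snd] <;> omega
    · -- quadrant boundary
      have hrv : r = 4 ^ (N+1) - 1 := by omega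
      have hqlt : q < 3 := by
        by_contra h
        push_neg at h
        have : 3 * 4 ^ (N+1) ≤ q * 4 ^ (N+1) := Nat.mul_le_mul_right _ h
        omega
      have hi1 : q * 4 ^ (N+1) + r + 1 = (q + 1) * 4 ^ (N+1) + 0 := by
        have : (q+1) * 4 ^ (N+1) = q * 4 ^ (N+1) + 4 ^ (N+1) := by ring
        omega
      obtain ⟨hd, hm⟩ := dm (4 ^ (N+1)) (q+1) 0 hk hk
      have hlast : hilbert (N+1) r = (2 ^ (N+1) - 1, 0) := by
        rw [hrv]; exact hilbert_last (N+1) (by omega)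
      have hzero : hilbert (N+1) 0 = (0, 0) := hilbert_zero (N+1)
      simp only [hilbert, hi1, hd, hm, hd0, hm0, hlast, hzero]
      unfold Adj
      interval_cases q <;> norm_num <;> omega

theorem hilbert_consecutive_edgeConnected (N i : ℕ) (hN : 1 ≤ N) (hi : i < 4 ^ N - 1) :
    EdgeConnected (hilbert N i) (hilbert N (i + 1)) := by
  exact adj_edgeConnected (hilbert_adj N hN i hi)
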